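/- Let a, b, c be the invariants a = x_{p0}x_{q0}, b = x_{p1}x_{q1}, c = x_{p0}x_{q1}+x_{p1}x_{q0} for the curve (cos θ, sin 2θ, cos 3θ) with polynomial parametrization as above. Then the 4×4 determinant of tangent directions (the stationarity determinant), after removing the factor (x_{p0}x_{q1}-x_{p1}x_{q0})⁴, is a nonzero constant multiple of (a-b)·c·(3a⁴-6a²b²+2a²c²+3b⁴+2b²c²-c⁴) when expressed in a, b, c. -/

import Mathlib

open MvPolynomial

/-- The four binary sextics parametrizing the projective closure of the curve
`(cos θ, sin 2θ, cos 3θ)`. -/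
noncomputable def curveF : Fin 4 → MvPolynomial (Fin 2) ℚ :=
  ![(X 0 ^ 2 + X 1 ^ 2) ^ 3,
    (X 0 ^ 2 - X 1 ^ 2) * (X 0 ^ 2 + X 1 ^ 2) ^ 2,
    4 * (X 0 ^ 2 - X 1 ^ 2) * (X 0 ^ 2 + X 1 ^ 2) * X 0 * X 1,
    (X 0 ^ 2 - X 1 ^ 2) * (X 1 ^ 4 - 14 * X 1 ^ 2 * X 0 ^ 2 + X 0 ^ 4)]

/-- Substitution of the variables `x_{p0}, x_{p1}` (variables `0, 1` of the
four-variable ring). -/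
noncomputable def substP : MvPolynomial (Fin 2) ℚ →ₐ[ℚ] MvPolynomial (Fin 4) ℚ :=
  aeval ![X 0, X 1]

/-- Substitution of the variables `x_{q0}, x_{q1}` (variables `2, 3` of the
four-variable ring). -/
noncomputable def substQ : MvPolynomial (Fin 2) ℚ →ₐ[ℚ] MvPolynomial (Fin 4) ℚ :=
  aeval ![X 2, X 3]

/-- The 4×4 stationarity matrix whose rows are the partial derivatives
`∂F_j/∂x_{p0}`, `∂F_j/∂x_{p1}` at `x_p` and `∂F_j/∂x_{q0}`, `∂F_j/∂x_{q1}` at `x_q`. -/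
noncomputable def stationarityMatrix : Matrix (Fin 4) (Fin 4) (MvPolynomial (Fin 4) ℚ) :=
  fun i j =>
    if (i : ℕ) = 0 then substP (pderiv 0 (curveF j))
    else if (i : ℕ) = 1 then substP (pderiv 1 (curveF j))
    else if (i : ℕ) = 2 then substQ (pderiv 0 (curveF j))
    else substQ (pderiv 1 (curveF j))

/-- The curve `Φ = (a-b)·c·(3a⁴-6a²b²+2a²c²+3b⁴+2b²c²-c⁴)` of stationary
bisecants, in the invariants `a = X 0`, `b = X 1`, `c = X 2`. -/
noncomputable def Phi : MvPolynomial (Fin 3) ℚ :=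
  (X 0 - X 1) * X 2 *
    (3 * X 0 ^ 4 - 6 * X 0 ^ 2 * X 1 ^ 2 + 2 * X 0 ^ 2 * X 2 ^ 2 + 3 * X 1 ^ 4
      + 2 * X 1 ^ 2 * X 2 ^ 2 - X 2 ^ 4)

lemma pderiv_ofNat (i : Fin 2) (n : ℕ) [n.AtLeastTwo] :
    pderiv i (OfNat.ofNat n : MvPolynomial (Fin 2) ℚ) = 0 := by
  rw [show (OfNat.ofNat n : MvPolynomial (Fin 2) ℚ) = C (OfNat.ofNat n) from
    (map_ofNat C n).symm, pderiv_C]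

set_option maxHeartbeats 4000000 in
lemma my_det_fin_four {R : Type*} [CommRing R] (A : Matrix (Fin 4) (Fin 4) R) :
    A.det =
        A 0 0 * A 1 1 * A 2 2 * A 3 3
      - A 0 0 * A 1 1 * A 2 3 * A 3 2
      - A 0 0 * A 1 2 * A 2 1 * A 3 3
      + A 0 0 * A 1 2 * A 2 3 * A 3 1
      + A 0 0 * A 1 3 * A 2 1 * A 3 2
      - A 0 0 * A 1 3 * A 2 2 * A 3 1
      - A 0 1 * A 1 0 * A 2 2 * A 3 3
      + A 0 1 * A 1 0 * A 2 3 * A 3 2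
      + A 0 1 * A 1 2 * A 2 0 * A 3 3
      - A 0 1 * A 1 2 * A 2 3 * A 3 0
      - A 0 1 * A 1 3 * A 2 0 * A 3 2
      + A 0 1 * A 1 3 * A 2 2 * A 3 0
      + A 0 2 * A 1 0 * A 2 1 * A 3 3
      - A 0 2 * A 1 0 * A 2 3 * A 3 1
      - A 0 2 * A 1 1 * A 2 0 * A 3 3
      + A 0 2 * A 1 1 * A 2 3 * A 3 0
      + A 0 2 * A 1 3 * A 2 0 * A 3 1
      - A 0 2 * A 1 3 * A 2 1 * A 3 0
      - A 0 3 * A 1 0 * A 2 1 * A 3 2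
      + A 0 3 * A 1 0 * A 2 2 * A 3 1
      + A 0 3 * A 1 1 * A 2 0 * A 3 2
      - A 0 3 * A 1 1 * A 2 2 * A 3 0
      - A 0 3 * A 1 2 * A 2 0 * A 3 1
      + A 0 3 * A 1 2 * A 2 1 * A 3 0 := by
  simp [Matrix.det_succ_row_zero, Fin.sum_univ_succ, Fin.succAbove,
    show ((2:Fin 3).succ = 3) from rfl, show ((1:Fin 3).succ = 2) from rfl, show (Fin.castSucc (2:Fin 3)) = 2 from rfl]
  ring

set_option maxHeartbeats 4000000 in
/-- The stationarity determinant of the curve `(cos θ, sin 2θ, cos 3θ)` equals,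
after removing the factor `(x_{p0}x_{q1} - x_{p1}x_{q0})⁴`, a nonzero constant
multiple of `(a-b)·c·(3a⁴-6a²b²+2a²c²+3b⁴+2b²c²-c⁴)` expressed in the invariants
`a = x_{p0}x_{q0}`, `b = x_{p1}x_{q1}`, `c = x_{p0}x_{q1} + x_{p1}x_{q0}`. -/
theorem stationarity_determinant_factorization :
    ∃ k : ℚ, k ≠ 0 ∧
      stationarityMatrix.det =
        C k * (X 0 * X 3 - X 1 * X 2) ^ 4 *
          aeval ![X 0 * X 2, X 1 * X 3, X 0 * X 3 + X 1 * X 2] Phi := by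
  refine ⟨9216, by norm_num, ?_⟩
  have e00 : stationarityMatrix 0 0 = (6:MvPolynomial (Fin 4) ℚ) * X 0 * X 1^4 + (12:MvPolynomial (Fin 4) ℚ) * X 0^3 * X 1^2 + (6:MvPolynomial (Fin 4) ℚ) * X 0^5 := by
    simp [stationarityMatrix, curveF, substP, substQ, pderiv_mul, pderiv_pow,
      pderiv_X_self, pderiv_X_of_ne, Derivation.leibniz_pow, smul_eq_mul, map_ofNat, pderiv_ofNat 0 4, pderiv_ofNat 1 4, pderiv_ofNat 0 14, pderiv_ofNat 1 14,
      show ((0:Fin 4):ℕ) = 0 from rfl, show ((1:Fin 4):ℕ) = 1 from rfl,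
      show ((2:Fin 4):ℕ) = 2 from rfl, show ((3:Fin 4):ℕ) = 3 from rfl]
    ring
  have e01 : stationarityMatrix 0 1 = (-2:MvPolynomial (Fin 4) ℚ) * X 0 * X 1^4 + (4:MvPolynomial (Fin 4) ℚ) * X 0^3 * X 1^2 + (6:MvPolynomial (Fin 4) ℚ) * X 0^5 := by
    simp [stationarityMatrix, curveF, substP, substQ, pderiv_mul, pderiv_pow,
      pderiv_X_self, pderiv_X_of_ne, Derivation.leibniz_pow, smul_eq_mul, map_ofNat, pderiv_ofNat 0 4, pderiv_ofNat 1 4, pderiv_ofNat 0 14, pderiv_ofNat 1 14,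
      show ((0:Fin 4):ℕ) = 0 from rfl, show ((1:Fin 4):ℕ) = 1 from rfl,
      show ((2:Fin 4):ℕ) = 2 from rfl, show ((3:Fin 4):ℕ) = 3 from rfl]
    ring
  have e02 : stationarityMatrix 0 2 = (-4:MvPolynomial (Fin 4) ℚ) * X 1^5 + (20:MvPolynomial (Fin 4) ℚ) * X 0^4 * X 1 := by
    simp [stationarityMatrix, curveF, substP, substQ, pderiv_mul, pderiv_pow,
      pderiv_X_self, pderiv_X_of_ne, Derivation.leibniz_pow, smul_eq_mul, map_ofNat, pderiv_ofNat 0 4, pderiv_ofNat 1 4, pderiv_ofNat 0 14, pderiv_ofNat 1 14,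
      show ((0:Fin 4):ℕ) = 0 from rfl, show ((1:Fin 4):ℕ) = 1 from rfl,
      show ((2:Fin 4):ℕ) = 2 from rfl, show ((3:Fin 4):ℕ) = 3 from rfl]
    ring
  have e03 : stationarityMatrix 0 3 = (30:MvPolynomial (Fin 4) ℚ) * X 0 * X 1^4 + (-60:MvPolynomial (Fin 4) ℚ) * X 0^3 * X 1^2 + (6:MvPolynomial (Fin 4) ℚ) * X 0^5 := by
    simp [stationarityMatrix, curveF, substP, substQ, pderiv_mul, pderiv_pow,
      pderiv_X_self, pderiv_X_of_ne, Derivation.leibniz_pow, smul_eq_mul, map_ofNat, pderiv_ofNat 0 4, pderiv_ofNat 1 4, pderiv_ofNat 0 14, pderiv_ofNat 1 14,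
      show ((0:Fin 4):ℕ) = 0 from rfl, show ((1:Fin 4):ℕ) = 1 from rfl,
      show ((2:Fin 4):ℕ) = 2 from rfl, show ((3:Fin 4):ℕ) = 3 from rfl]
    ring
  have e10 : stationarityMatrix 1 0 = (6:MvPolynomial (Fin 4) ℚ) * X 1^5 + (12:MvPolynomial (Fin 4) ℚ) * X 0^2 * X 1^3 + (6:MvPolynomial (Fin 4) ℚ) * X 0^4 * X 1 := by
    simp [stationarityMatrix, curveF, substP, substQ, pderiv_mul, pderiv_pow,
      pderiv_X_self, pderiv_X_of_ne, Derivation.leibniz_pow, smul_eq_mul, map_ofNat, pderiv_ofNat 0 4, pderiv_ofNat 1 4, pderiv_ofNat 0 14, pderiv_ofNat 1 14,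
      show ((0:Fin 4):ℕ) = 0 from rfl, show ((1:Fin 4):ℕ) = 1 from rfl,
      show ((2:Fin 4):ℕ) = 2 from rfl, show ((3:Fin 4):ℕ) = 3 from rfl]
    ring
  have e11 : stationarityMatrix 1 1 = (-6:MvPolynomial (Fin 4) ℚ) * X 1^5 + (-4:MvPolynomial (Fin 4) ℚ) * X 0^2 * X 1^3 + (2:MvPolynomial (Fin 4) ℚ) * X 0^4 * X 1 := by
    simp [stationarityMatrix, curveF, substP, substQ, pderiv_mul, pderiv_pow,
      pderiv_X_self, pderiv_X_of_ne, Derivation.leibniz_pow, smul_eq_mul, map_ofNat, pderiv_ofNat 0 4, pderiv_ofNat 1 4, pderiv_ofNat 0 14, pderiv_ofNat 1 14,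
      show ((0:Fin 4):ℕ) = 0 from rfl, show ((1:Fin 4):ℕ) = 1 from rfl,
      show ((2:Fin 4):ℕ) = 2 from rfl, show ((3:Fin 4):ℕ) = 3 from rfl]
    ring
  have e12 : stationarityMatrix 1 2 = (-20:MvPolynomial (Fin 4) ℚ) * X 0 * X 1^4 + (4:MvPolynomial (Fin 4) ℚ) * X 0^5 := by
    simp [stationarityMatrix, curveF, substP, substQ, pderiv_mul, pderiv_pow,
      pderiv_X_self, pderiv_X_of_ne, Derivation.leibniz_pow, smul_eq_mul, map_ofNat, pderiv_ofNat 0 4, pderiv_ofNat 1 4, pderiv_ofNat 0 14, pderiv_ofNat 1 14,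
      show ((0:Fin 4):ℕ) = 0 from rfl, show ((1:Fin 4):ℕ) = 1 from rfl,
      show ((2:Fin 4):ℕ) = 2 from rfl, show ((3:Fin 4):ℕ) = 3 from rfl]
    ring
  have e13 : stationarityMatrix 1 3 = (-6:MvPolynomial (Fin 4) ℚ) * X 1^5 + (60:MvPolynomial (Fin 4) ℚ) * X 0^2 * X 1^3 + (-30:MvPolynomial (Fin 4) ℚ) * X 0^4 * X 1 := by
    simp [stationarityMatrix, curveF, substP, substQ, pderiv_mul, pderiv_pow,
      pderiv_X_self, pderiv_X_of_ne, Derivation.leibniz_pow, smul_eq_mul, map_ofNat, pderiv_ofNat 0 4, pderiv_ofNat 1 4, pderiv_ofNat 0 14, pderiv_ofNat 1 14,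
      show ((0:Fin 4):ℕ) = 0 from rfl, show ((1:Fin 4):ℕ) = 1 from rfl,
      show ((2:Fin 4):ℕ) = 2 from rfl, show ((3:Fin 4):ℕ) = 3 from rfl]
    ring
  have e20 : stationarityMatrix 2 0 = (6:MvPolynomial (Fin 4) ℚ) * X 2 * X 3^4 + (12:MvPolynomial (Fin 4) ℚ) * X 2^3 * X 3^2 + (6:MvPolynomial (Fin 4) ℚ) * X 2^5 := by
    simp [stationarityMatrix, curveF, substP, substQ, pderiv_mul, pderiv_pow,
      pderiv_X_self, pderiv_X_of_ne, Derivation.leibniz_pow, smul_eq_mul, map_ofNat, pderiv_ofNat 0 4, pderiv_ofNat 1 4, pderiv_ofNat 0 14, pderiv_ofNat 1 14,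
      show ((0:Fin 4):ℕ) = 0 from rfl, show ((1:Fin 4):ℕ) = 1 from rfl,
      show ((2:Fin 4):ℕ) = 2 from rfl, show ((3:Fin 4):ℕ) = 3 from rfl]
    ring
  have e21 : stationarityMatrix 2 1 = (-2:MvPolynomial (Fin 4) ℚ) * X 2 * X 3^4 + (4:MvPolynomial (Fin 4) ℚ) * X 2^3 * X 3^2 + (6:MvPolynomial (Fin 4) ℚ) * X 2^5 := by
    simp [stationarityMatrix, curveF, substP, substQ, pderiv_mul, pderiv_pow,
      pderiv_X_self, pderiv_X_of_ne, Derivation.leibniz_pow, smul_eq_mul, map_ofNat, pderiv_ofNat 0 4, pderiv_ofNat 1 4, pderiv_ofNat 0 14, pderiv_ofNat 1 14,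
      show ((0:Fin 4):ℕ) = 0 from rfl, show ((1:Fin 4):ℕ) = 1 from rfl,
      show ((2:Fin 4):ℕ) = 2 from rfl, show ((3:Fin 4):ℕ) = 3 from rfl]
    ring
  have e22 : stationarityMatrix 2 2 = (-4:MvPolynomial (Fin 4) ℚ) * X 3^5 + (20:MvPolynomial (Fin 4) ℚ) * X 2^4 * X 3 := by
    simp [stationarityMatrix, curveF, substP, substQ, pderiv_mul, pderiv_pow,
      pderiv_X_self, pderiv_X_of_ne, Derivation.leibniz_pow, smul_eq_mul, map_ofNat, pderiv_ofNat 0 4, pderiv_ofNat 1 4, pderiv_ofNat 0 14, pderiv_ofNat 1 14,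
      show ((0:Fin 4):ℕ) = 0 from rfl, show ((1:Fin 4):ℕ) = 1 from rfl,
      show ((2:Fin 4):ℕ) = 2 from rfl, show ((3:Fin 4):ℕ) = 3 from rfl]
    ring
  have e23 : stationarityMatrix 2 3 = (30:MvPolynomial (Fin 4) ℚ) * X 2 * X 3^4 + (-60:MvPolynomial (Fin 4) ℚ) * X 2^3 * X 3^2 + (6:MvPolynomial (Fin 4) ℚ) * X 2^5 := by
    simp [stationarityMatrix, curveF, substP, substQ, pderiv_mul, pderiv_pow,
      pderiv_X_self, pderiv_X_of_ne, Derivation.leibniz_pow, smul_eq_mul, map_ofNat, pderiv_ofNat 0 4, pderiv_ofNat 1 4, pderiv_ofNat 0 14, pderiv_ofNat 1 14,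
      show ((0:Fin 4):ℕ) = 0 from rfl, show ((1:Fin 4):ℕ) = 1 from rfl,
      show ((2:Fin 4):ℕ) = 2 from rfl, show ((3:Fin 4):ℕ) = 3 from rfl]
    ring
  have e30 : stationarityMatrix 3 0 = (6:MvPolynomial (Fin 4) ℚ) * X 3^5 + (12:MvPolynomial (Fin 4) ℚ) * X 2^2 * X 3^3 + (6:MvPolynomial (Fin 4) ℚ) * X 2^4 * X 3 := by
    simp [stationarityMatrix, curveF, substP, substQ, pderiv_mul, pderiv_pow,
      pderiv_X_self, pderiv_X_of_ne, Derivation.leibniz_pow, smul_eq_mul, map_ofNat, pderiv_ofNat 0 4, pderiv_ofNat 1 4, pderiv_ofNat 0 14, pderiv_ofNat 1 14,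
      show ((0:Fin 4):ℕ) = 0 from rfl, show ((1:Fin 4):ℕ) = 1 from rfl,
      show ((2:Fin 4):ℕ) = 2 from rfl, show ((3:Fin 4):ℕ) = 3 from rfl]
    ring
  have e31 : stationarityMatrix 3 1 = (-6:MvPolynomial (Fin 4) ℚ) * X 3^5 + (-4:MvPolynomial (Fin 4) ℚ) * X 2^2 * X 3^3 + (2:MvPolynomial (Fin 4) ℚ) * X 2^4 * X 3 := by
    simp [stationarityMatrix, curveF, substP, substQ, pderiv_mul, pderiv_pow,
      pderiv_X_self, pderiv_X_of_ne, Derivation.leibniz_pow, smul_eq_mul, map_ofNat, pderiv_ofNat 0 4, pderiv_ofNat 1 4, pderiv_ofNat 0 14, pderiv_ofNat 1 14,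
      show ((0:Fin 4):ℕ) = 0 from rfl, show ((1:Fin 4):ℕ) = 1 from rfl,
      show ((2:Fin 4):ℕ) = 2 from rfl, show ((3:Fin 4):ℕ) = 3 from rfl]
    ring
  have e32 : stationarityMatrix 3 2 = (-20:MvPolynomial (Fin 4) ℚ) * X 2 * X 3^4 + (4:MvPolynomial (Fin 4) ℚ) * X 2^5 := by
    simp [stationarityMatrix, curveF, substP, substQ, pderiv_mul, pderiv_pow,
      pderiv_X_self, pderiv_X_of_ne, Derivation.leibniz_pow, smul_eq_mul, map_ofNat, pderiv_ofNat 0 4, pderiv_ofNat 1 4, pderiv_ofNat 0 14, pderiv_ofNat 1 14,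
      show ((0:Fin 4):ℕ) = 0 from rfl, show ((1:Fin 4):ℕ) = 1 from rfl,
      show ((2:Fin 4):ℕ) = 2 from rfl, show ((3:Fin 4):ℕ) = 3 from rfl]
    ring
  have e33 : stationarityMatrix 3 3 = (-6:MvPolynomial (Fin 4) ℚ) * X 3^5 + (60:MvPolynomial (Fin 4) ℚ) * X 2^2 * X 3^3 + (-30:MvPolynomial (Fin 4) ℚ) * X 2^4 * X 3 := by
    simp [stationarityMatrix, curveF, substP, substQ, pderiv_mul, pderiv_pow,
      pderiv_X_self, pderiv_X_of_ne, Derivation.leibniz_pow, smul_eq_mul, map_ofNat, pderiv_ofNat 0 4, pderiv_ofNat 1 4, pderiv_ofNat 0 14, pderiv_ofNat 1 14,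
      show ((0:Fin 4):ℕ) = 0 from rfl, show ((1:Fin 4):ℕ) = 1 from rfl,
      show ((2:Fin 4):ℕ) = 2 from rfl, show ((3:Fin 4):ℕ) = 3 from rfl]
    ring
  rw [my_det_fin_four, e00, e01, e02, e03, e10, e11, e12, e13,
    e20, e21, e22, e23, e30, e31, e32, e33]
  simp only [Phi, map_ofNat, map_add, map_sub, map_mul, map_pow, aeval_X,
    Matrix.cons_val_zero, Matrix.cons_val_one, Matrix.head_cons, Matrix.cons_val_two,
    Matrix.tail_cons]
  ring
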